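/- For a downset D in a partially ordered abelian group Q and a face τ of Q_+, the localization D_τ = {q ∈ D : q + τ ⊆ D} is a downset of Q and is a union of cosets of the subgroup Zτ generated by τ; that is, q ∈ D_τ implies q + Zτ ⊆ D_τ. -/

import Mathlib

variable {Q : Type} [AddCommGroup Q]

/-- The partial order induced by a positive cone: `a ≼ b` iff `b - a` lies in the
cone. -/
def cle (Qp : AddSubmonoid Q) (a b : Q) : Prop := b - a ∈ Qp

/-- The positive cone has trivial unit group. -/
def TrivUnits (Qp : AddSubmonoid Q) : Prop := ∀ x ∈ Qp, -x ∈ Qp → x = 0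

/-- A face of the positive cone: a submonoid of `Qp` whose complement in `Qp` is a
monoid ideal of `Qp`. -/
def IsFace (Qp σ : AddSubmonoid Q) : Prop :=
  σ ≤ Qp ∧ ∀ x ∈ Qp, ∀ y ∈ Qp, x + y ∈ σ → x ∈ σ

/-- A downset for the cone order. -/
def IsDown (Qp : AddSubmonoid Q) (D : Set Q) : Prop :=
  ∀ a b : Q, cle Qp a b → b ∈ D → a ∈ D

/-- The localization of a subset `S` along a face `τ`:
the elements `q ∈ S` with `q + τ ⊆ S`. -/
def loc (Qp : AddSubmonoid Q) (S : Set Q) (τ : AddSubmonoid Q) : Set Q :=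
  {q | q ∈ S ∧ ∀ f ∈ τ, q + f ∈ S}

/-- For a downset `D` in a partially ordered abelian group and a face `τ` of the
positive cone, the localization `D_τ` is a downset and is a union of cosets of the
subgroup generated by `τ`. -/
theorem statement15 (Qp : AddSubmonoid Q) (htriv : TrivUnits Qp)
    (D : Set Q) (hD : IsDown Qp D) (τ : AddSubmonoid Q) (hτ : IsFace Qp τ) :
    IsDown Qp (loc Qp D τ) ∧
    ∀ q ∈ loc Qp D τ, ∀ g ∈ AddSubgroup.closure (τ : Set Q), q + g ∈ loc Qp D τ := by
  have hdown : IsDown Qp (loc Qp D τ) := by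
    intro a b hab hb
    refine ⟨hD a b hab hb.1, fun f hf => ?_⟩
    exact hD (a + f) (b + f) (by simpa [cle, add_sub_add_right_eq_sub] using hab) (hb.2 f hf)
  refine ⟨hdown, fun q hq g hg => ?_⟩
  have hrep : ∃ t ∈ τ, ∃ s ∈ τ, g = t - s := by
    induction hg using AddSubgroup.closure_induction with
    | mem x hx => exact ⟨x, hx, 0, τ.zero_mem, by simp⟩
    | zero => exact ⟨0, τ.zero_mem, 0, τ.zero_mem, by simp⟩
    | add x y _ _ hx hy =>
      obtain ⟨t, ht, s, hs, rfl⟩ := hx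
      obtain ⟨t', ht', s', hs', rfl⟩ := hy
      exact ⟨t + t', τ.add_mem ht ht', s + s', τ.add_mem hs hs', by abel⟩
    | neg x _ hx =>
      obtain ⟨t, ht, s, hs, rfl⟩ := hx
      exact ⟨s, hs, t, ht, by abel⟩
  obtain ⟨t, ht, s, hs, rfl⟩ := hrep
  have hqt : q + t ∈ loc Qp D τ := by
    refine ⟨hq.2 t ht, fun f hf => ?_⟩
    have := hq.2 (t + f) (τ.add_mem ht hf)
    simpa [add_assoc] using this
  have : cle Qp (q + (t - s)) (q + t) := by
    simp only [cle]
    have : q + t - (q + (t - s)) = s := by abel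
    rw [this]; exact hτ.1 hs
  exact hdown _ _ this hqt
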